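/- arXiv:2603.23328 — 2 statements merged into one kernel-verified Lean document; each statement's English description precedes it below -/
import Mathlib

section
/- Let φ = (1 + √5)/2 and let ICOS ⊂ ℝ³ be the 30-point icosidodecahedron vertex set. The collection of 3-element subsets {a, b, c} ⊆ ICOS with a + b + c = 0 has exactly 20 members, and every point of ICOS belongs to exactly 2 of these 20 zero-sum triples. -/
local notation "⟪" x ", " y "⟫" => @inner ℝ _ _ x y

noncomputable abbrev pt (a b c : ℝ) : EuclideanSpace ℝ (Fin 3) := WithLp.toLp 2 ![a, b, c]

noncomputable def phi : ℝ := (1 + Real.sqrt 5) / 2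

/-- The 30 vertices of the icosidodecahedron: all even (cyclic) coordinate
permutations of `(0, 0, ±1)` and `(±(φ-1)/2, ±1/2, ±φ/2)`. -/
def ICOS : Set (EuclideanSpace ℝ (Fin 3)) :=
  {x | (∃ s ∈ ({1, -1} : Set ℝ),
          x = pt 0 0 s ∨ x = pt 0 s 0 ∨ x = pt s 0 0) ∨
       (∃ s₁ ∈ ({1, -1} : Set ℝ), ∃ s₂ ∈ ({1, -1} : Set ℝ), ∃ s₃ ∈ ({1, -1} : Set ℝ),
          x = pt (s₁ * ((phi - 1) / 2)) (s₂ * (1 / 2)) (s₃ * (phi / 2)) ∨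
          x = pt (s₂ * (1 / 2)) (s₃ * (phi / 2)) (s₁ * ((phi - 1) / 2)) ∨
          x = pt (s₃ * (phi / 2)) (s₁ * ((phi - 1) / 2)) (s₂ * (1 / 2)))}

abbrev Pm := (ℤ × ℤ) × (ℤ × ℤ) × (ℤ × ℤ)

noncomputable def ev : ℤ × ℤ →+ ℝ where
  toFun p := ((p.1 : ℝ) + (p.2 : ℝ) * phi) / 2
  map_zero' := by simp
  map_add' p q := by simp only [Prod.fst_add, Prod.snd_add]; push_cast; ring

lemma phi_irr : Irrational phi := Real.goldenRatio_irrational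

lemma ev_inj : Function.Injective ev := by
  rintro ⟨a, b⟩ ⟨c, d⟩ h
  simp only [ev, AddMonoidHom.coe_mk, ZeroHom.coe_mk] at h
  have hbd : b = d := by
    by_contra hne
    apply phi_irr
    refine ⟨((c : ℚ) - a) / ((b : ℚ) - d), ?_⟩
    have hbd' : ((b : ℝ)) - d ≠ 0 := by
      intro h0
      exact hne (by exact_mod_cast sub_eq_zero.mp h0)
    push_cast
    field_simp
    linarith
  subst hbd
  have : (a : ℝ) = c := by linarith
  exact Prod.ext (by exact_mod_cast this) rfl

noncomputable def F : Pm →+ EuclideanSpace ℝ (Fin 3) where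
  toFun p := WithLp.toLp 2 ![ev p.1, ev p.2.1, ev p.2.2]
  map_zero' := by
    ext i; fin_cases i <;> simp
  map_add' p q := by
    ext i; fin_cases i <;>
      simp [PiLp.add_apply, Matrix.cons_val_zero, Matrix.cons_val_one]

lemma F_inj : Function.Injective F := by
  intro p q h
  have h0 : ev p.1 = ev q.1 := congrArg (fun v => v 0) h
  have h1 : ev p.2.1 = ev q.2.1 := congrArg (fun v => v 1) h
  have h2 : ev p.2.2 = ev q.2.2 := congrArg (fun v => v 2) h
  exact Prod.ext (ev_inj h0) (Prod.ext (ev_inj h1) (ev_inj h2))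

lemma F_pt (a1 b1 a2 b2 a3 b3 : ℤ) :
    F ((a1, b1), (a2, b2), (a3, b3)) =
      pt (((a1 : ℝ) + (b1 : ℝ) * phi) / 2) (((a2 : ℝ) + (b2 : ℝ) * phi) / 2)
        (((a3 : ℝ) + (b3 : ℝ) * phi) / 2) := rfl

lemma pt_ext {a b c d e f : ℝ} (h1 : a = d) (h2 : b = e) (h3 : c = f) :
    pt a b c = pt d e f := by rw [h1, h2, h3]

def V : Finset Pm := {((0,0),(0,0),(2,0)), ((0,0),(2,0),(0,0)), ((2,0),(0,0),(0,0)), ((0,0),(0,0),(-2,0)), ((0,0),(-2,0),(0,0)), ((-2,0),(0,0),(0,0)), ((-1,1),(1,0),(0,1)), ((1,0),(0,1),(-1,1)), ((0,1),(-1,1),(1,0)), ((-1,1),(1,0),(0,-1)), ((1,0),(0,-1),(-1,1)), ((0,-1),(-1,1),(1,0)), ((-1,1),(-1,0),(0,1)), ((-1,0),(0,1),(-1,1)), ((0,1),(-1,1),(-1,0)), ((-1,1),(-1,0),(0,-1)), ((-1,0),(0,-1),(-1,1)), ((0,-1),(-1,1),(-1,0)), ((1,-1),(1,0),(0,1)),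 ((1,0),(0,1),(1,-1)), ((0,1),(1,-1),(1,0)), ((1,-1),(1,0),(0,-1)), ((1,0),(0,-1),(1,-1)), ((0,-1),(1,-1),(1,0)), ((1,-1),(-1,0),(0,1)), ((-1,0),(0,1),(1,-1)), ((0,1),(1,-1),(-1,0)), ((1,-1),(-1,0),(0,-1)), ((-1,0),(0,-1),(1,-1)), ((0,-1),(1,-1),(-1,0))}

def S : Finset (Finset Pm) := (V.powersetCard 3).filter fun s => ∑ x ∈ s, x = 0

set_option maxRecDepth 10000 in
lemma core : S.card = 20 ∧ ∀ q ∈ V, (S.filter (q ∈ ·)).card = 2 := by decide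

lemma sign_int {s : ℝ} (hs : s ∈ ({1, -1} : Set ℝ)) :
    ∃ z : ℤ, (z : ℝ) = s ∧ (z = 1 ∨ z = -1) := by
  rcases hs with rfl | rfl
  · exact ⟨1, by norm_num, Or.inl rfl⟩
  · exact ⟨-1, by norm_num, Or.inr rfl⟩

lemma icos_sub : ICOS ⊆ F '' ↑V := by
  intro x hx
  rcases hx with ⟨s, hs, h⟩ | ⟨s1, hs1, s2, hs2, s3, hs3, h⟩
  · obtain ⟨z, hz, hz'⟩ := sign_int hs
    subst hz
    rcases h with rfl | rfl | rfl
    · exact ⟨((0,0),(0,0),(2*z,0)), by rcases hz' with rfl | rfl <;> decide,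
        by rw [F_pt]; exact pt_ext (by push_cast; ring) (by push_cast; ring) (by push_cast; ring)⟩
    · exact ⟨((0,0),(2*z,0),(0,0)), by rcases hz' with rfl | rfl <;> decide,
        by rw [F_pt]; exact pt_ext (by push_cast; ring) (by push_cast; ring) (by push_cast; ring)⟩
    · exact ⟨((2*z,0),(0,0),(0,0)), by rcases hz' with rfl | rfl <;> decide,
        by rw [F_pt]; exact pt_ext (by push_cast; ring) (by push_cast; ring) (by push_cast; ring)⟩
  · obtain ⟨z1, hz1, hz1'⟩ := sign_int hs1
    obtain ⟨z2, hz2, hz2'⟩ := sign_int hs2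
    obtain ⟨z3, hz3, hz3'⟩ := sign_int hs3
    subst hz1; subst hz2; subst hz3
    have hmem : ∀ w : Pm, (w = ((-z1,z1),(z2,0),(0,z3)) ∨ w = ((z2,0),(0,z3),(-z1,z1)) ∨
        w = ((0,z3),(-z1,z1),(z2,0))) → w ∈ V := by
      intro w hw
      rcases hz1' with rfl | rfl <;> rcases hz2' with rfl | rfl <;> rcases hz3' with rfl | rfl <;>
        rcases hw with rfl | rfl | rfl <;> decide
    rcases h with rfl | rfl | rfl
    · exact ⟨((-z1,z1),(z2,0),(0,z3)), hmem _ (Or.inl rfl),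
        by rw [F_pt]; exact pt_ext (by push_cast; ring) (by push_cast; ring) (by push_cast; ring)⟩
    · exact ⟨((z2,0),(0,z3),(-z1,z1)), hmem _ (Or.inr (Or.inl rfl)),
        by rw [F_pt]; exact pt_ext (by push_cast; ring) (by push_cast; ring) (by push_cast; ring)⟩
    · exact ⟨((0,z3),(-z1,z1),(z2,0)), hmem _ (Or.inr (Or.inr rfl)),
        by rw [F_pt]; exact pt_ext (by push_cast; ring) (by push_cast; ring) (by push_cast; ring)⟩

lemma icos_sup : F '' ↑V ⊆ ICOS := by
  rintro x ⟨p, hp, rfl⟩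
  rw [Finset.mem_coe] at hp
  fin_cases hp
  · exact Or.inl ⟨1, by simp, Or.inl (by rw [F_pt]; exact pt_ext (by push_cast; ring) (by push_cast; ring) (by push_cast; ring))⟩
  · exact Or.inl ⟨1, by simp, Or.inr (Or.inl (by rw [F_pt]; exact pt_ext (by push_cast; ring) (by push_cast; ring) (by push_cast; ring)))⟩
  · exact Or.inl ⟨1, by simp, Or.inr (Or.inr (by rw [F_pt]; exact pt_ext (by push_cast; ring) (by push_cast; ring) (by push_cast; ring)))⟩
  · exact Or.inl ⟨(-1), by simp, Or.inl (by rw [F_pt]; exact pt_ext (by push_cast; ring) (by push_cast; ring) (by push_cast; ring))⟩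
  · exact Or.inl ⟨(-1), by simp, Or.inr (Or.inl (by rw [F_pt]; exact pt_ext (by push_cast; ring) (by push_cast; ring) (by push_cast; ring)))⟩
  · exact Or.inl ⟨(-1), by simp, Or.inr (Or.inr (by rw [F_pt]; exact pt_ext (by push_cast; ring) (by push_cast; ring) (by push_cast; ring)))⟩
  · exact Or.inr ⟨1, by simp, 1, by simp, 1, by simp, Or.inl (by rw [F_pt]; exact pt_ext (by push_cast; ring) (by push_cast; ring) (by push_cast; ring))⟩
  · exact Or.inr ⟨1, by simp, 1, by simp, 1, by simp, Or.inr (Or.inl (by rw [F_pt]; exact pt_ext (by push_cast; ring) (by push_cast; ring) (by push_cast; ring)))⟩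
  · exact Or.inr ⟨1, by simp, 1, by simp, 1, by simp, Or.inr (Or.inr (by rw [F_pt]; exact pt_ext (by push_cast; ring) (by push_cast; ring) (by push_cast; ring)))⟩
  · exact Or.inr ⟨1, by simp, 1, by simp, (-1), by simp, Or.inl (by rw [F_pt]; exact pt_ext (by push_cast; ring) (by push_cast; ring) (by push_cast; ring))⟩
  · exact Or.inr ⟨1, by simp, 1, by simp, (-1), by simp, Or.inr (Or.inl (by rw [F_pt]; exact pt_ext (by push_cast; ring) (by push_cast; ring) (by push_cast; ring)))⟩
  · exact Or.inr ⟨1, by simp, 1, by simp, (-1), by simp, Or.inr (Or.inr (by rw [F_pt]; exact pt_ext (by push_cast; ring) (by push_cast; ring) (by push_cast; ring)))⟩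
  · exact Or.inr ⟨1, by simp, (-1), by simp, 1, by simp, Or.inl (by rw [F_pt]; exact pt_ext (by push_cast; ring) (by push_cast; ring) (by push_cast; ring))⟩
  · exact Or.inr ⟨1, by simp, (-1), by simp, 1, by simp, Or.inr (Or.inl (by rw [F_pt]; exact pt_ext (by push_cast; ring) (by push_cast; ring) (by push_cast; ring)))⟩
  · exact Or.inr ⟨1, by simp, (-1), by simp, 1, by simp, Or.inr (Or.inr (by rw [F_pt]; exact pt_ext (by push_cast; ring) (by push_cast; ring) (by push_cast; ring)))⟩
  · exact Or.inr ⟨1, by simp, (-1), by simp, (-1), by simp, Or.inl (by rw [F_pt]; exact pt_ext (by push_cast; ring) (by push_cast; ring) (by push_cast; ring))⟩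
  · exact Or.inr ⟨1, by simp, (-1), by simp, (-1), by simp, Or.inr (Or.inl (by rw [F_pt]; exact pt_ext (by push_cast; ring) (by push_cast; ring) (by push_cast; ring)))⟩
  · exact Or.inr ⟨1, by simp, (-1), by simp, (-1), by simp, Or.inr (Or.inr (by rw [F_pt]; exact pt_ext (by push_cast; ring) (by push_cast; ring) (by push_cast; ring)))⟩
  · exact Or.inr ⟨(-1), by simp, 1, by simp, 1, by simp, Or.inl (by rw [F_pt]; exact pt_ext (by push_cast; ring) (by push_cast; ring) (by push_cast; ring))⟩
  · exact Or.inr ⟨(-1), by simp, 1, by simp, 1, by simp, Or.inr (Or.inl (by rw [F_pt]; exact pt_ext (by push_cast; ring) (by push_cast; ring) (by push_cast; ring)))⟩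
  · exact Or.inr ⟨(-1), by simp, 1, by simp, 1, by simp, Or.inr (Or.inr (by rw [F_pt]; exact pt_ext (by push_cast; ring) (by push_cast; ring) (by push_cast; ring)))⟩
  · exact Or.inr ⟨(-1), by simp, 1, by simp, (-1), by simp, Or.inl (by rw [F_pt]; exact pt_ext (by push_cast; ring) (by push_cast; ring) (by push_cast; ring))⟩
  · exact Or.inr ⟨(-1), by simp, 1, by simp, (-1), by simp, Or.inr (Or.inl (by rw [F_pt]; exact pt_ext (by push_cast; ring) (by push_cast; ring) (by push_cast; ring)))⟩
  · exact Or.inr ⟨(-1), by simp, 1, by simp, (-1), by simp, Or.inr (Or.inr (by rw [F_pt]; exact pt_ext (by push_cast; ring) (by push_cast; ring) (by push_cast; ring)))⟩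
  · exact Or.inr ⟨(-1), by simp, (-1), by simp, 1, by simp, Or.inl (by rw [F_pt]; exact pt_ext (by push_cast; ring) (by push_cast; ring) (by push_cast; ring))⟩
  · exact Or.inr ⟨(-1), by simp, (-1), by simp, 1, by simp, Or.inr (Or.inl (by rw [F_pt]; exact pt_ext (by push_cast; ring) (by push_cast; ring) (by push_cast; ring)))⟩
  · exact Or.inr ⟨(-1), by simp, (-1), by simp, 1, by simp, Or.inr (Or.inr (by rw [F_pt]; exact pt_ext (by push_cast; ring) (by push_cast; ring) (by push_cast; ring)))⟩
  · exact Or.inr ⟨(-1), by simp, (-1), by simp, (-1), by simp, Or.inl (by rw [F_pt]; exact pt_ext (by push_cast; ring) (by push_cast; ring) (by push_cast; ring))⟩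
  · exact Or.inr ⟨(-1), by simp, (-1), by simp, (-1), by simp, Or.inr (Or.inl (by rw [F_pt]; exact pt_ext (by push_cast; ring) (by push_cast; ring) (by push_cast; ring)))⟩
  · exact Or.inr ⟨(-1), by simp, (-1), by simp, (-1), by simp, Or.inr (Or.inr (by rw [F_pt]; exact pt_ext (by push_cast; ring) (by push_cast; ring) (by push_cast; ring)))⟩

lemma icos_eq : ICOS = F '' ↑V := Set.Subset.antisymm icos_sub icos_sup

noncomputable def Femb : Pm ↪ EuclideanSpace ℝ (Fin 3) := ⟨F, F_inj⟩

lemma key (t : Finset (EuclideanSpace ℝ (Fin 3))) :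
    (↑t ⊆ ICOS ∧ t.card = 3 ∧ ∑ x ∈ t, x = 0) ↔ ∃ s ∈ S, t = s.map Femb := by
  classical
  constructor
  · rintro ⟨hsub, hcard, hsum⟩
    rw [icos_eq, ← Finset.coe_image, Finset.coe_subset] at hsub
    obtain ⟨s, hsV, rfl⟩ := Finset.subset_image_iff.mp hsub
    have himg : Finset.image (⇑F) s = s.map Femb := (Finset.map_eq_image Femb s).symm
    rw [himg] at hcard hsum ⊢
    refine ⟨s, ?_, rfl⟩
    rw [S, Finset.mem_filter, Finset.mem_powersetCard]
    refine ⟨⟨hsV, by simpa using hcard⟩, ?_⟩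
    apply F_inj
    rw [map_zero, map_sum]
    simpa [Finset.sum_map, Femb] using hsum
  · rintro ⟨s, hsS, rfl⟩
    rw [S, Finset.mem_filter, Finset.mem_powersetCard] at hsS
    obtain ⟨⟨hsV, hcard⟩, hsum⟩ := hsS
    refine ⟨?_, by simp [hcard], ?_⟩
    · rw [icos_eq]
      intro x hx
      rw [Finset.mem_coe, Finset.mem_map] at hx
      obtain ⟨y, hy, rfl⟩ := hx
      exact ⟨y, hsV hy, rfl⟩
    · rw [Finset.sum_map]
      have : ∑ x ∈ s, Femb x = F (∑ x ∈ s, x) := (map_sum F _ _).symm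
      rw [this, hsum, map_zero]

/-- The icosidodecahedron has exactly 20 zero-sum triples (3-element subsets
summing to the zero vector), and every vertex lies in exactly 2 of them. -/
theorem icos_zero_sum_triples :
    {t : Finset (EuclideanSpace ℝ (Fin 3)) |
        ↑t ⊆ ICOS ∧ t.card = 3 ∧ ∑ x ∈ t, x = 0}.ncard = 20 ∧
    ∀ p ∈ ICOS,
      {t : Finset (EuclideanSpace ℝ (Fin 3)) |
        ↑t ⊆ ICOS ∧ t.card = 3 ∧ ∑ x ∈ t, x = 0 ∧ p ∈ t}.ncard = 2 := by
  classical
  constructor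
  · have hset : {t : Finset (EuclideanSpace ℝ (Fin 3)) |
        ↑t ⊆ ICOS ∧ t.card = 3 ∧ ∑ x ∈ t, x = 0} = ↑(S.image (fun s => s.map Femb)) := by
      ext t
      simp only [Set.mem_setOf_eq, Finset.coe_image, Set.mem_image, Finset.mem_coe, key]
      constructor
      · rintro ⟨s, hs, rfl⟩; exact ⟨s, hs, rfl⟩
      · rintro ⟨s, hs, rfl⟩; exact ⟨s, hs, rfl⟩
    rw [hset, Set.ncard_coe_finset,
      Finset.card_image_of_injective _ (Finset.map_injective Femb), core.1]
  · intro p hp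
    rw [icos_eq] at hp
    obtain ⟨q, hq, rfl⟩ := hp
    rw [Finset.mem_coe] at hq
    have hset : {t : Finset (EuclideanSpace ℝ (Fin 3)) |
        ↑t ⊆ ICOS ∧ t.card = 3 ∧ ∑ x ∈ t, x = 0 ∧ F q ∈ t} =
        ↑((S.filter (q ∈ ·)).image (fun s => s.map Femb)) := by
      ext t
      simp only [Set.mem_setOf_eq, Finset.coe_image, Set.mem_image, Finset.mem_coe,
        Finset.mem_filter]
      constructor
      · rintro ⟨h1, h2, h3, h4⟩
        obtain ⟨s, hs, rfl⟩ := (key t).mp ⟨h1, h2, h3⟩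
        refine ⟨s, ⟨hs, ?_⟩, rfl⟩
        have : Femb q ∈ s.map Femb := h4
        exact (Finset.mem_map' Femb).mp this
      · rintro ⟨s, ⟨hs, hqs⟩, rfl⟩
        obtain ⟨h1, h2, h3⟩ := (key (s.map Femb)).mpr ⟨s, hs, rfl⟩
        exact ⟨h1, h2, h3, (Finset.mem_map' Femb).mpr hqs⟩
    rw [hset, Set.ncard_coe_finset,
      Finset.card_image_of_injective _ (Finset.map_injective Femb), core.2 q hq]
end

section
/- There exists a subset S of the unit sphere S² ⊂ ℝ³ of cardinality 36 such that: S is closed under the antipodal map x ↦ -x; the absolute value of every coordinate of every point of S belongs to the set {0, (2-√3)/2, (√3-1)/2, 1/2, √(√3-1), √3/2, 1}; there is NO map q : S → ℤ with q(x) ∈ {-4,-3,-2,-1,1,2,3,4} for all x ∈ S, q(-x) = -q(x) for all x ∈ S, and q(x) + q(y) + q(z) = 0 whenever x, y, z ∈ S satisfy x + y + z = 0; while there IS such a map with values in {-5,...,-1,1,...,5}. -/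
local notation "⟪" x ", " y "⟫" => @inner ℝ _ _ x y

namespace CE36

def Am : Fin 36 → Fin 3 → ℤ := ![![0, 2, 0], ![0, 0, 1], ![0, 1, 0], ![0, 0, 2], ![0, -1, 0], ![0, 0, 1], ![0, -2, 0], ![0, 0, -1], ![0, -1, 0], ![0, 0, -2], ![0, 1, 0], ![0, 0, -1], ![0, -1, -1], ![0, 1, 2], ![0, 2, 1], ![0, -1, 1], ![0, 1, -2], ![0, 2, -1], ![0, 1, -1], ![0, -1, 2], ![0, -2, 1], ![0, 1, 1], ![0, -1, -2], ![0, -2, -1], ![0, -1, -1], ![0, 1, 2], ![0, 2, 1], ![0, -1, 1], ![0, 1, -2], ![0, 2, -1], ![0, 1, -1], ![0, -1, 2], ![0, -2, 1], ![0, 1, 1], ![0, -1, -2], ![0, -2, -1]]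
def Bm : Fin 36 → Fin 3 → ℤ := ![![0, 0, 0], ![0, 1, 0], ![0, 0, 1], ![0, 0, 0], ![0, 0, 1], ![0, -1, 0], ![0, 0, 0], ![0, -1, 0], ![0, 0, -1], ![0, 0, 0], ![0, 0, -1], ![0, 1, 0], ![0, 1, 1], ![0, 0, -1], ![0, -1, 0], ![0, 1, -1], ![0, 0, 1], ![0, -1, 0], ![0, -1, 1], ![0, 0, -1], ![0, 1, 0], ![0, -1, -1], ![0, 0, 1], ![0, 1, 0], ![0, 1, 1], ![0, 0, -1], ![0, -1, 0], ![0, 1, -1], ![0, 0, 1], ![0, -1, 0], ![0, -1, 1], ![0, 0, -1], ![0, 1, 0], ![0, -1, -1], ![0, 0, 1], ![0, 1, 0]]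
def Cm : Fin 36 → Fin 3 → ℤ := ![![0, 0, 0], ![0, 0, 0], ![0, 0, 0], ![0, 0, 0], ![0, 0, 0], ![0, 0, 0], ![0, 0, 0], ![0, 0, 0], ![0, 0, 0], ![0, 0, 0], ![0, 0, 0], ![0, 0, 0], ![1, 0, 0], ![1, 0, 0], ![1, 0, 0], ![1, 0, 0], ![1, 0, 0], ![1, 0, 0], ![1, 0, 0], ![1, 0, 0], ![1, 0, 0], ![1, 0, 0], ![1, 0, 0], ![1, 0, 0], ![-1, 0, 0], ![-1, 0, 0], ![-1, 0, 0], ![-1, 0, 0], ![-1, 0, 0], ![-1, 0, 0], ![-1, 0, 0], ![-1, 0, 0], ![-1, 0, 0], ![-1, 0, 0], ![-1, 0, 0], ![-1, 0, 0]]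
def Vv : Fin 36 → ℤ := ![-4, -3, -3, -1, 1, 2, 4, 3, 3, 1, -1, -2, -4, -5, -5, -3, -5, -4, -3, -1, -2, -2, -1, -1, 2, 1, 1, 3, 1, 2, 3, 5, 4, 4, 5, 5]
def antiIdx : Fin 36 → Fin 36 := ![6, 7, 8, 9, 10, 11, 0, 1, 2, 3, 4, 5, 33, 34, 35, 30, 31, 32, 27, 28, 29, 24, 25, 26, 21, 22, 23, 18, 19, 20, 15, 16, 17, 12, 13, 14]

noncomputable def s3 : ℝ := Real.sqrt 3
noncomputable def tt : ℝ := Real.sqrt (Real.sqrt 3 - 1)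

lemma hs3 : s3 ^ 2 = 3 := Real.sq_sqrt (by norm_num)
lemma s3_nonneg : 0 ≤ s3 := Real.sqrt_nonneg _
lemma s3_lt_2 : s3 < 2 := by nlinarith [hs3, s3_nonneg]
lemma s3_gt : 1 < s3 := by nlinarith [hs3, s3_nonneg]
lemma htt : tt ^ 2 = s3 - 1 := Real.sq_sqrt (by have := s3_gt; unfold s3 at this; linarith)
lemma tt_nonneg : 0 ≤ tt := Real.sqrt_nonneg _

noncomputable def f (n : Fin 36) (m : Fin 3) : ℝ :=
  ((Am n m : ℝ) + (Bm n m : ℝ) * s3) / 2 + (Cm n m : ℝ) * tt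

noncomputable def P (n : Fin 36) : EuclideanSpace ℝ (Fin 3) := pt (f n 0) (f n 1) (f n 2)

lemma irr3 : Irrational s3 := (Nat.prime_three).irrational_sqrt

lemma lin_indep (p q : ℤ) (h : (p : ℝ) + q * s3 = 0) : p = 0 ∧ q = 0 := by
  rcases eq_or_ne q 0 with hq | hq
  · refine ⟨?_, hq⟩
    have : (p : ℝ) = 0 := by rw [hq] at h; push_cast at h; linarith
    exact_mod_cast this
  · exfalso
    apply irr3
    refine ⟨(-p / q : ℚ), ?_⟩
    have hq' : (q : ℝ) ≠ 0 := Int.cast_ne_zero.2 hq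
    push_cast
    field_simp
    linarith [h]

lemma indep (p q r : ℤ) (h : (p : ℝ) + q * s3 + r * tt = 0) :
    p = 0 ∧ q = 0 ∧ r = 0 := by
  have key : ((p ^ 2 + 3 * q ^ 2 + r ^ 2 : ℤ) : ℝ) + ((2 * p * q - r ^ 2 : ℤ) : ℝ) * s3 = 0 := by
    push_cast
    linear_combination ((p : ℝ) + q * s3 - r * tt) * h - (q : ℝ) ^ 2 * hs3 + (r : ℝ) ^ 2 * htt
  obtain ⟨h1, h2⟩ := lin_indep _ _ key
  refine ⟨?_, ?_, ?_⟩ <;> nlinarith [sq_nonneg p, sq_nonneg q, sq_nonneg r, h1]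

lemma dnorm : ∀ n : Fin 36,
    Am n 0 ^ 2 + Am n 1 ^ 2 + Am n 2 ^ 2 + 3 * (Bm n 0 ^ 2 + Bm n 1 ^ 2 + Bm n 2 ^ 2)
      - 4 * (Cm n 0 ^ 2 + Cm n 1 ^ 2 + Cm n 2 ^ 2) = 4 ∧
    Am n 0 * Bm n 0 + Am n 1 * Bm n 1 + Am n 2 * Bm n 2
      + 2 * (Cm n 0 ^ 2 + Cm n 1 ^ 2 + Cm n 2 ^ 2) = 0 ∧
    Am n 0 * Cm n 0 + Am n 1 * Cm n 1 + Am n 2 * Cm n 2 = 0 ∧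
    Bm n 0 * Cm n 0 + Bm n 1 * Cm n 1 + Bm n 2 * Cm n 2 = 0 := by decide

lemma fsq (n : Fin 36) : f n 0 ^ 2 + f n 1 ^ 2 + f n 2 ^ 2 = 1 := by
  obtain ⟨h1, h2, h3, h4⟩ := dnorm n
  have H1 : (Am n 0 : ℝ) ^ 2 + (Am n 1 : ℝ) ^ 2 + (Am n 2 : ℝ) ^ 2
      + 3 * ((Bm n 0 : ℝ) ^ 2 + (Bm n 1 : ℝ) ^ 2 + (Bm n 2 : ℝ) ^ 2)
      - 4 * ((Cm n 0 : ℝ) ^ 2 + (Cm n 1 : ℝ) ^ 2 + (Cm n 2 : ℝ) ^ 2) = 4 := by exact_mod_cast h1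
  have H2 : (Am n 0 : ℝ) * (Bm n 0 : ℝ) + (Am n 1 : ℝ) * (Bm n 1 : ℝ) + (Am n 2 : ℝ) * (Bm n 2 : ℝ)
      + 2 * ((Cm n 0 : ℝ) ^ 2 + (Cm n 1 : ℝ) ^ 2 + (Cm n 2 : ℝ) ^ 2) = 0 := by exact_mod_cast h2
  have H3 : (Am n 0 : ℝ) * (Cm n 0 : ℝ) + (Am n 1 : ℝ) * (Cm n 1 : ℝ) + (Am n 2 : ℝ) * (Cm n 2 : ℝ) = 0 := by
    exact_mod_cast h3
  have H4 : (Bm n 0 : ℝ) * (Cm n 0 : ℝ) + (Bm n 1 : ℝ) * (Cm n 1 : ℝ) + (Bm n 2 : ℝ) * (Cm n 2 : ℝ) = 0 := by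
    exact_mod_cast h4
  unfold f
  linear_combination H1 / 4 + (s3 / 2) * H2 + tt * H3 + (s3 * tt) * H4
    + (((Bm n 0 : ℝ) ^ 2 + (Bm n 1 : ℝ) ^ 2 + (Bm n 2 : ℝ) ^ 2) / 4) * hs3
    + ((Cm n 0 : ℝ) ^ 2 + (Cm n 1 : ℝ) ^ 2 + (Cm n 2 : ℝ) ^ 2) * htt

lemma norm_P (n : Fin 36) : ‖P n‖ = 1 := by
  rw [EuclideanSpace.norm_eq]
  rw [Fin.sum_univ_three]
  simp only [Real.norm_eq_abs, sq_abs]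
  rw [show (P n 0) = f n 0 from rfl, show (P n 1) = f n 1 from rfl,
    show (P n 2) = f n 2 from rfl, fsq n, Real.sqrt_one]

lemma dinj : ∀ n n' : Fin 36, Am n 0 = Am n' 0 → Bm n 0 = Bm n' 0 → Cm n 0 = Cm n' 0 →
    Am n 1 = Am n' 1 → Bm n 1 = Bm n' 1 → Am n 2 = Am n' 2 → Bm n 2 = Bm n' 2 → n = n' := by decide

lemma f_eq (n n' : Fin 36) (m : Fin 3) (h : f n m = f n' m) :
    Am n m = Am n' m ∧ Bm n m = Bm n' m ∧ Cm n m = Cm n' m := by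
  have h0 : ((Am n m - Am n' m : ℤ) : ℝ) + ((Bm n m - Bm n' m : ℤ) : ℝ) * s3
      + ((2 * (Cm n m - Cm n' m) : ℤ) : ℝ) * tt = 0 := by
    unfold f at h
    push_cast
    linear_combination 2 * h
  obtain ⟨e1, e2, e3⟩ := indep _ _ _ h0
  refine ⟨by omega, by omega, by omega⟩

lemma P_inj : Function.Injective P := by
  intro n n' h
  have h0 := f_eq n n' 0 (congrArg (· 0) h)
  have h1 := f_eq n n' 1 (congrArg (· 1) h)
  have h2 := f_eq n n' 2 (congrArg (· 2) h)
  exact dinj n n' h0.1 h0.2.1 h0.2.2 h1.1 h1.2.1 h2.1 h2.2.1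

lemma dneg : ∀ n : Fin 36, ∀ m : Fin 3, Am (antiIdx n) m = -Am n m ∧
    Bm (antiIdx n) m = -Bm n m ∧ Cm (antiIdx n) m = -Cm n m := by decide

lemma f_neg (n : Fin 36) (m : Fin 3) : f (antiIdx n) m = -f n m := by
  obtain ⟨h1, h2, h3⟩ := dneg n m
  unfold f
  rw [h1, h2, h3]
  push_cast
  ring

lemma P_neg (n : Fin 36) : P (antiIdx n) = -P n := by
  apply PiLp.ext; intro m
  fin_cases m
  · exact f_neg n 0
  · exact f_neg n 1
  · exact f_neg n 2

lemma fsum (i j k : Fin 36) (m : Fin 3)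
    (h1 : Am i m + Am j m + Am k m = 0) (h2 : Bm i m + Bm j m + Bm k m = 0)
    (h3 : Cm i m + Cm j m + Cm k m = 0) :
    f i m + f j m + f k m = 0 := by
  have H1 : (Am i m : ℝ) + (Am j m : ℝ) + (Am k m : ℝ) = 0 := by exact_mod_cast h1
  have H2 : (Bm i m : ℝ) + (Bm j m : ℝ) + (Bm k m : ℝ) = 0 := by exact_mod_cast h2
  have H3 : (Cm i m : ℝ) + (Cm j m : ℝ) + (Cm k m : ℝ) = 0 := by exact_mod_cast h3
  unfold f
  linear_combination H1 / 2 + (s3 / 2) * H2 + tt * H3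

lemma sum_P (i j k : Fin 36)
    (h : ∀ m : Fin 3, Am i m + Am j m + Am k m = 0 ∧ Bm i m + Bm j m + Bm k m = 0 ∧
      Cm i m + Cm j m + Cm k m = 0) :
    P i + P j + P k = 0 := by
  apply PiLp.ext; intro m
  fin_cases m
  · exact fsum i j k 0 (h 0).1 (h 0).2.1 (h 0).2.2
  · exact fsum i j k 1 (h 1).1 (h 1).2.1 (h 1).2.2
  · exact fsum i j k 2 (h 2).1 (h 2).2.1 (h 2).2.2

lemma sum_P_rev (i j k : Fin 36) (h : P i + P j + P k = 0) (m : Fin 3) :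
    Am i m + Am j m + Am k m = 0 ∧ Bm i m + Bm j m + Bm k m = 0 ∧
      Cm i m + Cm j m + Cm k m = 0 := by
  have hm : f i m + f j m + f k m = 0 := by
    fin_cases m
    · exact congrArg (· 0) h
    · exact congrArg (· 1) h
    · exact congrArg (· 2) h
  have h0 : ((Am i m + Am j m + Am k m : ℤ) : ℝ) + ((Bm i m + Bm j m + Bm k m : ℤ) : ℝ) * s3
      + ((2 * (Cm i m + Cm j m + Cm k m) : ℤ) : ℝ) * tt = 0 := by
    unfold f at hm
    push_cast
    linear_combination 2 * hm
  obtain ⟨e1, e2, e3⟩ := indep _ _ _ h0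
  exact ⟨e1, e2, by omega⟩

def L : List ℤ := [-4, -3, -2, -1, 1, 2, 3, 4]

def bad (x : ℤ) : Bool := x = 0 || x < -4 || x > 4

def chk (a b c d g : ℤ) : Bool :=
  bad (a+c) || bad (b+d) || bad (g+a+c-b) || bad (g+b+d-c) || bad (g+2*a-b+d) ||
  bad (g+a+2*d-c) || bad (g+2*a+c-b) || bad (g+a+c) || bad (g+a+2*d-c+b) ||
  bad (g+2*a+2*d) || bad (g+2*a-b+c+d) || bad (g+b+2*d-c) || bad (b+d+g)

set_option maxHeartbeats 10000000 in
lemma master : (L.all fun a => L.all fun b => L.all fun c => L.all fun d => L.all fun g =>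
    chk a b c d g) = true := by decide

lemma notbad : ∀ x ∈ L, bad x = false := by decide

lemma toL (x : ℤ) (h : x ∈ ({-4, -3, -2, -1, 1, 2, 3, 4} : Set ℤ)) : x ∈ L := by
  simp only [Set.mem_insert_iff, Set.mem_singleton_iff] at h
  rcases h with rfl | rfl | rfl | rfl | rfl | rfl | rfl | rfl <;> decide

lemma unsat (x0 x1 x2 x3 x4 x5 x6 x7 x8 x9 x10 x11 x12 x13 x14 x15 x16 x17 : ℤ)
    (m0 : x0 ∈ L) (m1 : x1 ∈ L) (m2 : x2 ∈ L) (m3 : x3 ∈ L) (m4 : x4 ∈ L) (m5 : x5 ∈ L)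
    (m6 : x6 ∈ L) (m7 : x7 ∈ L) (m8 : x8 ∈ L) (m9 : x9 ∈ L) (m10 : x10 ∈ L) (m11 : x11 ∈ L)
    (m12 : x12 ∈ L) (m13 : x13 ∈ L) (m14 : x14 ∈ L) (m15 : x15 ∈ L) (m16 : x16 ∈ L)
    (m17 : x17 ∈ L)
    (t1 : x2 + -x0 + -x4 = 0) (t2 : x3 + -x1 + -x5 = 0)
    (t3 : -x0 + x10 + -x16 = 0) (t4 : -x1 + x6 + -x16 = 0)
    (t5 : -x1 + x7 + -x15 = 0) (t6 : -x2 + x6 + -x17 = 0)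
    (t7 : -x2 + x8 + -x15 = 0) (t8 : -x3 + x8 + -x11 = 0)
    (t9 : -x3 + x14 + -x17 = 0) (t10 : -x4 + x12 + -x11 = 0)
    (t11 : -x4 + x14 + -x9 = 0) (t12 : -x5 + x12 + -x10 = 0)
    (t13 : -x5 + x13 + -x9 = 0) : False := by
  have hM := master
  simp only [List.all_eq_true] at hM
  have hc := hM x0 m0 x1 m1 x4 m4 x5 m5 x17 m17
  have hfalse : chk x0 x1 x4 x5 x17 = false := by
    simp only [chk]
    rw [show x1 + x5 + x17 = x14 by omega]
    rw [show x17 + x0 + 2*x5 - x4 + x1 = x7 by omega]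
    rw [show x0 + x4 = x2 by omega]
    rw [show x1 + x5 = x3 by omega]
    rw [show x17 + x0 + x4 - x1 = x16 by omega]
    rw [show x17 + x1 + x5 - x4 = x9 by omega]
    rw [show x17 + 2*x0 - x1 + x5 = x11 by omega]
    rw [show x17 + x0 + 2*x5 - x4 = x15 by omega]
    rw [show x17 + 2*x0 + x4 - x1 = x10 by omega]
    rw [show x17 + x0 + x4 = x6 by omega]
    rw [show x17 + 2*x0 + 2*x5 = x8 by omega]
    rw [show x17 + 2*x0 - x1 + x4 + x5 = x12 by omega]
    rw [show x17 + x1 + 2*x5 - x4 = x13 by omega]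
    rw [notbad x2 m2, notbad x3 m3, notbad x16 m16, notbad x9 m9, notbad x11 m11,
      notbad x15 m15, notbad x10 m10, notbad x6 m6, notbad x7 m7, notbad x8 m8,
      notbad x12 m12, notbad x13 m13, notbad x14 m14]
    rfl
  rw [hfalse] at hc
  exact absurd hc (by decide)

def clist : List (ℤ × ℤ × ℤ) := [(0,0,0), (2,0,0), (-2,0,0), (1,0,0), (-1,0,0),
  (0,1,0), (0,-1,0), (-1,1,0), (1,-1,0), (2,-1,0), (-2,1,0), (0,0,1), (0,0,-1)]

lemma dcoord : ∀ n : Fin 36, ∀ m : Fin 3, (Am n m, Bm n m, Cm n m) ∈ clist := by decide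

lemma habs (n : Fin 36) (m : Fin 3) :
    |f n m| ∈ ({0, (2 - Real.sqrt 3) / 2, (Real.sqrt 3 - 1) / 2, 1 / 2,
      Real.sqrt (Real.sqrt 3 - 1), Real.sqrt 3 / 2, 1} : Set ℝ) := by
  have hc := dcoord n m
  have hs2 := s3_lt_2
  have hs1 := s3_gt
  have ht0 := tt_nonneg
  simp only [clist, List.mem_cons, List.not_mem_nil, or_false, Prod.mk.injEq] at hc
  simp only [Set.mem_insert_iff, Set.mem_singleton_iff]
  unfold f
  rcases hc with ⟨h1,h2,h3⟩|⟨h1,h2,h3⟩|⟨h1,h2,h3⟩|⟨h1,h2,h3⟩|⟨h1,h2,h3⟩|⟨h1,h2,h3⟩|⟨h1,h2,h3⟩|⟨h1,h2,h3⟩|⟨h1,h2,h3⟩|⟨h1,h2,h3⟩|⟨h1,h2,h3⟩|⟨h1,h2,h3⟩|⟨h1,h2,h3⟩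
  · rw [h1, h2, h3]
    push_cast
    refine Or.inl ?_
    simp
  · rw [h1, h2, h3]
    push_cast
    refine Or.inr (Or.inr (Or.inr (Or.inr (Or.inr (Or.inr ?_)))))
    rw [abs_of_nonneg (by linarith)]
    unfold s3 tt
    ring
  · rw [h1, h2, h3]
    push_cast
    refine Or.inr (Or.inr (Or.inr (Or.inr (Or.inr (Or.inr ?_)))))
    rw [abs_of_nonpos (by linarith)]
    unfold s3 tt
    ring
  · rw [h1, h2, h3]
    push_cast
    refine Or.inr (Or.inr (Or.inr (Or.inl ?_)))
    rw [abs_of_nonneg (by linarith)]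
    unfold s3 tt
    ring
  · rw [h1, h2, h3]
    push_cast
    refine Or.inr (Or.inr (Or.inr (Or.inl ?_)))
    rw [abs_of_nonpos (by linarith)]
    unfold s3 tt
    ring
  · rw [h1, h2, h3]
    push_cast
    refine Or.inr (Or.inr (Or.inr (Or.inr (Or.inr (Or.inl ?_)))))
    rw [abs_of_nonneg (by linarith)]
    unfold s3 tt
    ring
  · rw [h1, h2, h3]
    push_cast
    refine Or.inr (Or.inr (Or.inr (Or.inr (Or.inr (Or.inl ?_)))))
    rw [abs_of_nonpos (by linarith)]
    unfold s3 tt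
    ring
  · rw [h1, h2, h3]
    push_cast
    refine Or.inr (Or.inr (Or.inl ?_))
    rw [abs_of_nonneg (by linarith)]
    unfold s3 tt
    ring
  · rw [h1, h2, h3]
    push_cast
    refine Or.inr (Or.inr (Or.inl ?_))
    rw [abs_of_nonpos (by linarith)]
    unfold s3 tt
    ring
  · rw [h1, h2, h3]
    push_cast
    refine Or.inr (Or.inl ?_)
    rw [abs_of_nonneg (by linarith)]
    unfold s3 tt
    ring
  · rw [h1, h2, h3]
    push_cast
    refine Or.inr (Or.inl ?_)
    rw [abs_of_nonpos (by linarith)]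
    unfold s3 tt
    ring
  · rw [h1, h2, h3]
    push_cast
    refine Or.inr (Or.inr (Or.inr (Or.inr (Or.inl ?_))))
    rw [abs_of_nonneg (by linarith)]
    unfold s3 tt
    ring
  · rw [h1, h2, h3]
    push_cast
    refine Or.inr (Or.inr (Or.inr (Or.inr (Or.inl ?_))))
    rw [abs_of_nonpos (by linarith)]
    unfold s3 tt
    ring

open scoped Classical in
noncomputable def q6 : EuclideanSpace ℝ (Fin 3) → ℤ :=
  fun x => ∑ n : Fin 36, if x = P n then Vv n else 0

lemma q6P (j : Fin 36) : q6 (P j) = Vv j := by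
  unfold q6
  simp [Function.Injective.eq_iff P_inj, Finset.sum_ite_eq]

lemma dV : ∀ n : Fin 36,
    2 * Vv n = -6 * Cm n 0 - 4 * Am n 1 - 5 * Bm n 1 - Am n 2 - 2 * Bm n 2 := by decide

lemma dVneg : ∀ n : Fin 36, Vv (antiIdx n) = -Vv n := by decide

lemma dVL : ∀ n : Fin 36, Vv n ∈ ([-5,-4,-3,-2,-1,1,2,3,4,5] : List ℤ) := by decide

lemma toSet6 (x : ℤ) (h : x ∈ ([-5,-4,-3,-2,-1,1,2,3,4,5] : List ℤ)) :
    x ∈ ({-5, -4, -3, -2, -1, 1, 2, 3, 4, 5} : Set ℤ) := by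
  fin_cases h <;> simp

end CE36

open CE36 in
/-- Counterexample 2: a 36-point antipodally-closed subset of the unit sphere,
with all coordinate absolute values among
`{0, (2-√3)/2, (√3-1)/2, 1/2, √(√3-1), √3/2, 1}`, which admits a nowhere-zero
6-flow labeling but no nowhere-zero 5-flow labeling. -/
theorem counterexample_thirtysix_points :
    ∃ S : Set (EuclideanSpace ℝ (Fin 3)),
      S.Finite ∧
      S.ncard = 36 ∧
      (∀ x ∈ S, ‖x‖ = 1) ∧
      (∀ x ∈ S, -x ∈ S) ∧
      (∀ x ∈ S, ∀ i : Fin 3,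
        |x i| ∈ ({0, (2 - Real.sqrt 3) / 2, (Real.sqrt 3 - 1) / 2, 1 / 2,
          Real.sqrt (Real.sqrt 3 - 1), Real.sqrt 3 / 2, 1} : Set ℝ)) ∧
      (¬ ∃ q : EuclideanSpace ℝ (Fin 3) → ℤ,
        (∀ x ∈ S, q x ∈ ({-4, -3, -2, -1, 1, 2, 3, 4} : Set ℤ)) ∧
        (∀ x ∈ S, q (-x) = -q x) ∧
        (∀ x ∈ S, ∀ y ∈ S, ∀ z ∈ S, x + y + z = 0 → q x + q y + q z = 0)) ∧
      (∃ q : EuclideanSpace ℝ (Fin 3) → ℤ,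
        (∀ x ∈ S, q x ∈ ({-5, -4, -3, -2, -1, 1, 2, 3, 4, 5} : Set ℤ)) ∧
        (∀ x ∈ S, q (-x) = -q x) ∧
        (∀ x ∈ S, ∀ y ∈ S, ∀ z ∈ S, x + y + z = 0 → q x + q y + q z = 0)) := by

  classical
  refine ⟨Set.range P, Set.finite_range _, ?_, ?_, ?_, ?_, ?_, ?_⟩
  · rw [← Set.image_univ, Set.ncard_image_of_injective _ P_inj, Set.ncard_univ]
    simp
  · rintro x ⟨n, rfl⟩
    exact norm_P n
  · rintro x ⟨n, rfl⟩
    exact ⟨antiIdx n, P_neg n⟩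
  · rintro x ⟨n, rfl⟩ m
    fin_cases m
    · exact habs n 0
    · exact habs n 1
    · exact habs n 2
  · rintro ⟨q, hr, hn, hf⟩
    have hanti : ∀ n : Fin 36, q (P (antiIdx n)) = -q (P n) := fun n => by
      rw [P_neg n]; exact hn (P n) ⟨n, rfl⟩
    have h6 : q (P 6) = -q (P 0) := hanti 0
    have h7 : q (P 7) = -q (P 1) := hanti 1
    have h8 : q (P 8) = -q (P 2) := hanti 2
    have h9 : q (P 9) = -q (P 3) := hanti 3
    have h10 : q (P 10) = -q (P 4) := hanti 4
    have h11 : q (P 11) = -q (P 5) := hanti 5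
    have h24 : q (P 24) = -q (P 21) := hanti 21
    have h25 : q (P 25) = -q (P 22) := hanti 22
    have h26 : q (P 26) = -q (P 23) := hanti 23
    have h30 : q (P 30) = -q (P 15) := hanti 15
    have h31 : q (P 31) = -q (P 16) := hanti 16
    have h32 : q (P 32) = -q (P 17) := hanti 17
    have t1 : q (P 2) + q (P 6) + q (P 10) = 0 :=
      hf _ ⟨2, rfl⟩ _ ⟨6, rfl⟩ _ ⟨10, rfl⟩ (sum_P 2 6 10 (by decide))
    rw [h6, h10] at t1
    have t2 : q (P 3) + q (P 7) + q (P 11) = 0 :=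
      hf _ ⟨3, rfl⟩ _ ⟨7, rfl⟩ _ ⟨11, rfl⟩ (sum_P 3 7 11 (by decide))
    rw [h7, h11] at t2
    have t3 : q (P 6) + q (P 16) + q (P 25) = 0 :=
      hf _ ⟨6, rfl⟩ _ ⟨16, rfl⟩ _ ⟨25, rfl⟩ (sum_P 6 16 25 (by decide))
    rw [h6, h25] at t3
    have t4 : q (P 7) + q (P 12) + q (P 25) = 0 :=
      hf _ ⟨7, rfl⟩ _ ⟨12, rfl⟩ _ ⟨25, rfl⟩ (sum_P 7 12 25 (by decide))
    rw [h7, h25] at t4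
    have t5 : q (P 7) + q (P 13) + q (P 24) = 0 :=
      hf _ ⟨7, rfl⟩ _ ⟨13, rfl⟩ _ ⟨24, rfl⟩ (sum_P 7 13 24 (by decide))
    rw [h7, h24] at t5
    have t6 : q (P 8) + q (P 12) + q (P 26) = 0 :=
      hf _ ⟨8, rfl⟩ _ ⟨12, rfl⟩ _ ⟨26, rfl⟩ (sum_P 8 12 26 (by decide))
    rw [h8, h26] at t6
    have t7 : q (P 8) + q (P 14) + q (P 24) = 0 :=
      hf _ ⟨8, rfl⟩ _ ⟨14, rfl⟩ _ ⟨24, rfl⟩ (sum_P 8 14 24 (by decide))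
    rw [h8, h24] at t7
    have t8 : q (P 9) + q (P 14) + q (P 32) = 0 :=
      hf _ ⟨9, rfl⟩ _ ⟨14, rfl⟩ _ ⟨32, rfl⟩ (sum_P 9 14 32 (by decide))
    rw [h9, h32] at t8
    have t9 : q (P 9) + q (P 20) + q (P 26) = 0 :=
      hf _ ⟨9, rfl⟩ _ ⟨20, rfl⟩ _ ⟨26, rfl⟩ (sum_P 9 20 26 (by decide))
    rw [h9, h26] at t9
    have t10 : q (P 10) + q (P 18) + q (P 32) = 0 :=
      hf _ ⟨10, rfl⟩ _ ⟨18, rfl⟩ _ ⟨32, rfl⟩ (sum_P 10 18 32 (by decide))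
    rw [h10, h32] at t10
    have t11 : q (P 10) + q (P 20) + q (P 30) = 0 :=
      hf _ ⟨10, rfl⟩ _ ⟨20, rfl⟩ _ ⟨30, rfl⟩ (sum_P 10 20 30 (by decide))
    rw [h10, h30] at t11
    have t12 : q (P 11) + q (P 18) + q (P 31) = 0 :=
      hf _ ⟨11, rfl⟩ _ ⟨18, rfl⟩ _ ⟨31, rfl⟩ (sum_P 11 18 31 (by decide))
    rw [h11, h31] at t12
    have t13 : q (P 11) + q (P 19) + q (P 30) = 0 :=
      hf _ ⟨11, rfl⟩ _ ⟨19, rfl⟩ _ ⟨30, rfl⟩ (sum_P 11 19 30 (by decide))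
    rw [h11, h30] at t13
    exact unsat (q (P 0)) (q (P 1)) (q (P 2)) (q (P 3)) (q (P 4)) (q (P 5)) (q (P 12)) (q (P 13)) (q (P 14)) (q (P 15)) (q (P 16)) (q (P 17)) (q (P 18)) (q (P 19)) (q (P 20)) (q (P 21)) (q (P 22)) (q (P 23)) (toL _ (hr _ ⟨0, rfl⟩)) (toL _ (hr _ ⟨1, rfl⟩)) (toL _ (hr _ ⟨2, rfl⟩)) (toL _ (hr _ ⟨3, rfl⟩)) (toL _ (hr _ ⟨4, rfl⟩)) (toL _ (hr _ ⟨5, rfl⟩)) (toL _ (hr _ ⟨12, rfl⟩)) (toL _ (hr _ ⟨13, rfl⟩)) (toL _ (hr _ ⟨14, rfl⟩)) (toL _ (hr _ ⟨15, rfl⟩)) (toL _ (hr _ ⟨16, rfl⟩)) (toL _ (hr _ ⟨17, rfl⟩)) (toL _ (hr _ ⟨18, rfl⟩)) (toL _ (hr _ ⟨19, rfl⟩)) (toL _ (hr _ ⟨20, rfl⟩)) (toL _ (hr _ ⟨21, rfl⟩)) (toL _ (hr _ ⟨22, rfl⟩)) (toL _ (hr _ ⟨23, rfl⟩)) t1 t2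 t3 t4 t5 t6 t7 t8 t9 t10 t11 t12 t13
  · refine ⟨q6, ?_, ?_, ?_⟩
    · rintro x ⟨n, rfl⟩
      rw [q6P]
      exact toSet6 _ (dVL n)
    · rintro x ⟨n, rfl⟩
      rw [← P_neg n, q6P, q6P]
      exact dVneg n
    · rintro x ⟨i, rfl⟩ y ⟨j, rfl⟩ z ⟨k, rfl⟩ hsum
      rw [q6P, q6P, q6P]
      have h0 := sum_P_rev i j k hsum 0
      have h1 := sum_P_rev i j k hsum 1
      have h2 := sum_P_rev i j k hsum 2
      have vi := dV i
      have vj := dV j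
      have vk := dV k
      omega
end
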